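/- arXiv:1903.09125 — 4 statements merged into one kernel-verified Lean document; each statement's English description precedes it below -/
import Mathlib

section
/- Let Q be an n×n real symmetric positive definite matrix with all entries strictly positive, where n ≥ 2. Then for any nonempty proper subset S of the index set, there exist indices i ∈ S and j ∉ S such that the (i,j) entry of Q⁻¹ is strictly negative. -/
open Matrix

/-- Fiedler's theorem / connectedness of the negative-inverse graph: for a symmetric
positive definite entrywise strictly positive matrix, every nontrivial index split is
crossed by a strictly negative entry of the inverse. -/
theorem stmt_4 {n : ℕ} (hn : 2 ≤ n) (Q : Matrix (Fin n) (Fin n) ℝ)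
    (hsymm : Qᵀ = Q) (hpd : Q.PosDef) (hpos : ∀ i j, 0 < Q i j)
    (S : Finset (Fin n)) (hS : S.Nonempty) (hS' : S ≠ Finset.univ) :
    ∃ i ∈ S, ∃ j ∉ S, Q⁻¹ i j < 0 := by
  by_contra hcon
  push_neg at hcon
  obtain ⟨i₀, hi₀⟩ := hS
  obtain ⟨k₀, hk₀⟩ : ∃ k, k ∉ S := by
    by_contra hc
    push_neg at hc
    exact hS' (Finset.eq_univ_iff_forall.mpr hc)
  set P := Q⁻¹ with hPdef
  have hQsym : ∀ i j, Q i j = Q j i := by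
    intro i j
    conv_lhs => rw [← hsymm]
    rw [Matrix.transpose_apply]
  have hPsymm : ∀ i j, P i j = P j i := by
    intro i j
    have : Pᵀ = P := by
      rw [hPdef, Matrix.transpose_nonsing_inv, hsymm]
    conv_lhs => rw [← this]
    rw [Matrix.transpose_apply]
  have hPQ : P * Q = 1 := Matrix.nonsing_inv_mul Q (isUnit_iff_ne_zero.mpr hpd.det_pos.ne')
  have hPpd : P.PosDef := hpd.inv
  set x : Fin n → ℝ := fun j => if j ∈ S then 0 else Q i₀ j with hx
  have hxne : x ≠ 0 := by
    intro h0
    have h1 := congrFun h0 k₀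
    simp [hx, hk₀] at h1
    exact (hpos i₀ k₀).ne' h1
  have hquad : 0 < x ⬝ᵥ (P *ᵥ x) := by
    have := hPpd.dotProduct_mulVec_pos hxne
    simpa using this
  have key : ∀ k, k ∉ S → (P *ᵥ x) k ≤ 0 := by
    intro k hk
    have hki : k ≠ i₀ := fun h => hk (h ▸ hi₀)
    have h0 : ∑ j, P k j * Q j i₀ = 0 := by
      have := congrFun (congrFun hPQ k) i₀
      rw [Matrix.mul_apply] at this
      rw [this, Matrix.one_apply_ne hki]
    have hsum : (P *ᵥ x) k = ∑ j, P k j * Q j i₀ - ∑ j ∈ S, P k j * Q j i₀ := by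
      rw [Matrix.mulVec, dotProduct]
      rw [← Finset.sum_add_sum_compl S (fun j => P k j * Q j i₀)]
      have hl : ∑ j ∈ S, P k j * x j = 0 := by
        apply Finset.sum_eq_zero
        intro j hj
        simp [hx, hj]
      have hr : ∑ j ∈ Sᶜ, P k j * x j = ∑ j ∈ Sᶜ, P k j * Q j i₀ := by
        apply Finset.sum_congr rfl
        intro j hj
        rw [Finset.mem_compl] at hj
        simp [hx, hj, hQsym i₀ j]
      rw [← Finset.sum_add_sum_compl S (fun j => P k j * x j), hl, hr]
      ring
    rw [hsum, h0, zero_sub, neg_nonpos]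
    apply Finset.sum_nonneg
    intro j hj
    have hPj : 0 ≤ P j k := hcon j hj k hk
    rw [hPsymm k j]
    exact mul_nonneg hPj (hpos j i₀).le
  have : x ⬝ᵥ (P *ᵥ x) ≤ 0 := by
    rw [dotProduct]
    apply Finset.sum_nonpos
    intro k _
    by_cases hk : k ∈ S
    · simp [hx, hk]
    · have hxk : x k = Q i₀ k := by simp [hx, hk]
      rw [hxk]
      exact mul_nonpos_of_nonneg_of_nonpos (hpos i₀ k).le (key k hk)
  linarith
end

section
/- Let Q be a 2×2 real symmetric positive definite entrywise nonnegative matrix with invertible Q, and let R = Q⁻¹. Then for every vector y ∈ ℝ², |y|ᵀ R |y| ≤ yᵀ R y, where |y| is the entrywise absolute value. (I.e., goals in the positive orthant require no more energy than their sign-flipped versions.) -/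
open Matrix

/-- For a 2×2 symmetric positive definite entrywise-nonnegative matrix Q with R = Q⁻¹,
goals in the positive orthant require no more energy: |y|ᵀR|y| ≤ yᵀRy. -/
theorem stmt_8 (Q : Matrix (Fin 2) (Fin 2) ℝ)
    (hsymm : Qᵀ = Q) (hpd : Q.PosDef) (hnn : ∀ i j, 0 ≤ Q i j)
    (y : Fin 2 → ℝ) :
    (fun i => |y i|) ⬝ᵥ Q⁻¹.mulVec (fun i => |y i|) ≤ y ⬝ᵥ Q⁻¹.mulVec y := by
  have hdet : 0 < Q.det := hpd.det_pos
  have hb : Q 1 0 = Q 0 1 := (congrFun (congrFun hsymm.symm 0) 1).symm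
  have hbnn : 0 ≤ Q 0 1 := hnn 0 1
  rw [Matrix.inv_def, Matrix.adjugate_fin_two, Matrix.det_fin_two]
  simp only [dotProduct, Matrix.mulVec, Fin.sum_univ_two, Ring.inverse_eq_inv,
    Matrix.smul_apply, Matrix.cons_val', Matrix.cons_val_zero, Matrix.cons_val_one,
    Matrix.head_cons, Matrix.head_fin_const, Matrix.empty_val', Matrix.of_apply, Matrix.cons_val_fin_one,
    smul_eq_mul]
  have hinv : 0 < (Q 0 0 * Q 1 1 - Q 0 1 * Q 1 0)⁻¹ := by
    rw [Matrix.det_fin_two] at hdet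
    exact inv_pos.mpr hdet
  have h1 : y 0 * y 1 ≤ |y 0| * |y 1| := by
    rw [← abs_mul]; exact le_abs_self _
  have h2 : |y 0| * |y 0| = y 0 * y 0 := abs_mul_abs_self _
  have h3 : |y 1| * |y 1| = y 1 * y 1 := abs_mul_abs_self _
  rw [hb] at *
  set r := (Q 0 0 * Q 1 1 - Q 0 1 * Q 0 1)⁻¹ with hr
  have e2 : r * Q 1 1 * (|y 0| * |y 0|) = r * Q 1 1 * (y 0 * y 0) := by rw [h2]
  have e3 : r * Q 0 0 * (|y 1| * |y 1|) = r * Q 0 0 * (y 1 * y 1) := by rw [h3]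
  have e1 : r * Q 0 1 * (y 0 * y 1) ≤ r * Q 0 1 * (|y 0| * |y 1|) :=
    mul_le_mul_of_nonneg_left h1 (mul_nonneg hinv.le hbnn)
  nlinarith [e1, e2, e3]
end

section
/- Let Q be an entrywise strictly positive symmetric n×n real matrix (n ≥ 1). Then Q has a real eigenvalue λ equal to its spectral radius, with algebraic multiplicity one, and an associated eigenvector that is entrywise strictly positive; moreover λ strictly exceeds the absolute value of every other eigenvalue. -/
open Matrix

private lemma pf_aux {n : ℕ} (Q : Matrix (Fin n) (Fin n) ℝ)
    (hsymm : Qᵀ = Q) (hpos : ∀ i j, 0 < Q i j)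
    {lam : ℝ} {v : Fin n → ℝ} (hv : ∀ i, 0 < v i) (hlam : 0 < lam)
    (hev : Q.mulVec v = lam • v) {μ : ℝ} {w : Fin n → ℝ} (hw : w ≠ 0)
    (hQw : Q.mulVec w = μ • w) :
    |μ| ≤ lam ∧ (|μ| = lam → μ = lam ∧ ((∀ j, 0 < w j) ∨ (∀ j, w j < 0))) := by
  classical
  obtain ⟨j0, hj0⟩ : ∃ i, w i ≠ 0 := Function.ne_iff.mp hw
  have hmv : ∀ (x : Fin n → ℝ) i, (Q.mulVec x) i = ∑ j, Q i j * x j := by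
    intro x i; simp [Matrix.mulVec, dotProduct]
  have hQwi : ∀ i, ∑ j, Q i j * w j = μ * w i := by
    intro i; rw [← hmv, hQw]; simp
  have hQvi : ∀ i, ∑ j, Q i j * v j = lam * v i := by
    intro i; rw [← hmv, hev]; simp
  have hQsym : ∀ i j, Q i j = Q j i := by
    intro i j; exact (congrFun (congrFun hsymm i) j).symm
  have habs : ∀ i, |μ| * |w i| ≤ ∑ j, Q i j * |w j| := by
    intro i
    calc |μ| * |w i| = |μ * w i| := (abs_mul _ _).symm
      _ = |∑ j, Q i j * w j| := by rw [hQwi]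
      _ ≤ ∑ j, |Q i j * w j| := Finset.abs_sum_le_sum_abs _ _
      _ = ∑ j, Q i j * |w j| := by
          refine Finset.sum_congr rfl fun j _ => ?_
          rw [abs_mul, abs_of_pos (hpos i j)]
  have hswap : ∑ i, v i * (∑ j, Q i j * |w j|) = lam * ∑ j, v j * |w j| := by
    calc ∑ i, v i * (∑ j, Q i j * |w j|) = ∑ i, ∑ j, v i * (Q i j * |w j|) := by
          simp [Finset.mul_sum]
      _ = ∑ j, ∑ i, v i * (Q i j * |w j|) := Finset.sum_comm
      _ = ∑ j, (∑ i, Q j i * v i) * |w j| := by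
          refine Finset.sum_congr rfl fun j _ => ?_
          rw [Finset.sum_mul]
          refine Finset.sum_congr rfl fun i _ => ?_
          rw [hQsym i j]; ring
      _ = ∑ j, (lam * v j) * |w j| := by
          refine Finset.sum_congr rfl fun j _ => ?_
          rw [hQvi]
      _ = lam * ∑ j, v j * |w j| := by
          rw [Finset.mul_sum]
          exact Finset.sum_congr rfl fun j _ => by ring
  have hS : 0 < ∑ j, v j * |w j| :=
    Finset.sum_pos' (fun j _ => mul_nonneg (hv j).le (abs_nonneg _))
      ⟨j0, Finset.mem_univ _, mul_pos (hv j0) (abs_pos.mpr hj0)⟩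
  have hle : |μ| ≤ lam := by
    have h1 : ∑ i, v i * (|μ| * |w i|) ≤ ∑ i, v i * (∑ j, Q i j * |w j|) :=
      Finset.sum_le_sum fun i _ => mul_le_mul_of_nonneg_left (habs i) (hv i).le
    have h2 : ∑ i, v i * (|μ| * |w i|) = |μ| * ∑ i, v i * |w i| := by
      rw [Finset.mul_sum]; exact Finset.sum_congr rfl fun i _ => by ring
    rw [h2, hswap] at h1
    exact le_of_mul_le_mul_right (by linarith) hS
  refine ⟨hle, fun heq => ?_⟩
  have hz : ∀ i, ∑ j, Q i j * |w j| = lam * |w i| := by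
    have hsum0 : ∑ i, v i * (∑ j, Q i j * |w j| - lam * |w i|) = 0 := by
      have : ∑ i, v i * (∑ j, Q i j * |w j| - lam * |w i|)
          = (∑ i, v i * (∑ j, Q i j * |w j|)) - lam * ∑ i, v i * |w i| := by
        rw [Finset.mul_sum, ← Finset.sum_sub_distrib]
        exact Finset.sum_congr rfl fun i _ => by ring
      rw [this, hswap]; ring
    have hterm := (Finset.sum_eq_zero_iff_of_nonneg (fun i _ =>
      mul_nonneg (hv i).le (sub_nonneg.mpr (heq ▸ habs i)))).mp hsum0
    intro i
    have hi := hterm i (Finset.mem_univ i)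
    have := mul_eq_zero.mp hi
    rcases this with h | h
    · exact absurd h (hv i).ne'
    · linarith [sub_eq_zero.mp h]
  have hwabs : ∀ i, 0 < |w i| := by
    intro i
    have h0 : 0 < ∑ j, Q i j * |w j| :=
      Finset.sum_pos' (fun j _ => mul_nonneg (hpos i j).le (abs_nonneg _))
        ⟨j0, Finset.mem_univ _, mul_pos (hpos i j0) (abs_pos.mpr hj0)⟩
    rw [hz i] at h0
    nlinarith [abs_nonneg (w i)]
  have hSA : |∑ j, Q j0 j * w j| = ∑ j, Q j0 j * |w j| := by
    rw [hQwi, abs_mul, heq, hz j0]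
  rcases (abs_eq (Finset.sum_nonneg fun j _ =>
      mul_nonneg (hpos j0 j).le (abs_nonneg _))).mp hSA with hS1 | hS1
  · -- all positive
    have hall : ∀ j, w j = |w j| := by
      have h0 : ∑ j, Q j0 j * (|w j| - w j) = 0 := by
        have : ∑ j, Q j0 j * (|w j| - w j)
            = (∑ j, Q j0 j * |w j|) - ∑ j, Q j0 j * w j := by
          rw [← Finset.sum_sub_distrib]
          exact Finset.sum_congr rfl fun j _ => by ring
        rw [this, hS1]; ring
      have hterm := (Finset.sum_eq_zero_iff_of_nonneg (fun j _ =>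
        mul_nonneg (hpos j0 j).le (sub_nonneg.mpr (le_abs_self _)))).mp h0
      intro j
      have hj := hterm j (Finset.mem_univ j)
      rcases mul_eq_zero.mp hj with h | h
      · exact absurd h (hpos j0 j).ne'
      · linarith [sub_eq_zero.mp h]
    have hμ : μ = lam := by
      have h1 : μ * w j0 = lam * w j0 := by
        rw [← hQwi j0, hS1, hz j0, ← hall j0]
      exact mul_right_cancel₀ hj0 h1
    exact ⟨hμ, Or.inl fun j => by rw [hall j]; exact hwabs j⟩
  · -- all negative
    have hall : ∀ j, w j = -|w j| := by
      have h0 : ∑ j, Q j0 j * (|w j| + w j) = 0 := by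
        have : ∑ j, Q j0 j * (|w j| + w j)
            = (∑ j, Q j0 j * |w j|) + ∑ j, Q j0 j * w j := by
          rw [← Finset.sum_add_distrib]
          exact Finset.sum_congr rfl fun j _ => by ring
        rw [this, hS1]; ring
      have hterm := (Finset.sum_eq_zero_iff_of_nonneg (fun j _ =>
        mul_nonneg (hpos j0 j).le (by linarith [neg_abs_le (w j)]))).mp h0
      intro j
      have hj := hterm j (Finset.mem_univ j)
      rcases mul_eq_zero.mp hj with h | h
      · exact absurd h (hpos j0 j).ne'
      · linarith
    have hμ : μ = lam := by
      have h1 : μ * w j0 = lam * w j0 := by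
        rw [← hQwi j0, hS1, hz j0]
        conv_rhs => rw [hall j0]
        ring
      exact mul_right_cancel₀ hj0 h1
    refine ⟨hμ, Or.inr fun j => ?_⟩
    linarith [hwabs j, hall j]

private lemma pf_aux2 {n : ℕ} (Q : Matrix (Fin n) (Fin n) ℝ) (hpos : ∀ i j, 0 < Q i j)
    {lam : ℝ} {v u : Fin n → ℝ} (hv : ∀ i, 0 < v i) (hu : ∀ i, 0 < u i)
    (hev : Q.mulVec v = lam • v) (heu : Q.mulVec u = lam • u) (hne : Nonempty (Fin n)) :
    ∃ c : ℝ, u = c • v := by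
  classical
  obtain ⟨i0, -, hmin⟩ := Finset.exists_min_image Finset.univ (fun i => u i / v i)
    ⟨hne.some, Finset.mem_univ _⟩
  set c := u i0 / v i0 with hc
  have hcz : ∀ i, c * v i ≤ u i := by
    intro i
    have h := hmin i (Finset.mem_univ i)
    exact (le_div_iff₀ (hv i)).mp h
  have hz0 : u i0 - c * v i0 = 0 := by
    rw [hc, div_mul_cancel₀ _ (hv i0).ne']; ring
  by_cases hz : (fun i => u i - c * v i) = 0
  · refine ⟨c, funext fun i => ?_⟩
    have := congrFun hz i
    simp only [Pi.zero_apply] at this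
    simp only [Pi.smul_apply, smul_eq_mul]
    linarith
  · exfalso
    obtain ⟨j, hj⟩ := Function.ne_iff.mp hz
    have hjpos : 0 < u j - c * v j :=
      lt_of_le_of_ne (by linarith [hcz j]) (Ne.symm (by simpa using hj))
    have hmvz : Q.mulVec (fun i => u i - c * v i) = lam • (fun i => u i - c * v i) := by
      have h1 : (fun i => u i - c * v i) = u - c • v := by
        funext i; simp [mul_comm]
      rw [h1, Matrix.mulVec_sub, Matrix.mulVec_smul, hev, heu]
      funext i; simp; ring
    have hQzpos : 0 < (Q.mulVec (fun i => u i - c * v i)) i0 := by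
      have : (Q.mulVec (fun i => u i - c * v i)) i0 = ∑ l, Q i0 l * (u l - c * v l) := by
        simp [Matrix.mulVec, dotProduct]
      rw [this]
      exact Finset.sum_pos' (fun l _ => mul_nonneg (hpos i0 l).le (by linarith [hcz l]))
        ⟨j, Finset.mem_univ _, mul_pos (hpos i0 j) hjpos⟩
    rw [hmvz] at hQzpos
    simp only [Pi.smul_apply, smul_eq_mul] at hQzpos
    rw [hz0] at hQzpos
    simp at hQzpos

/-- Perron–Frobenius for symmetric entrywise strictly positive matrices: there is a real
eigenvalue lam equal to the spectral radius, of multiplicity one, with an entrywise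
strictly positive eigenvector, strictly dominating all other eigenvalues in modulus. -/
theorem stmt_10 {n : ℕ} (hn : 1 ≤ n) (Q : Matrix (Fin n) (Fin n) ℝ)
    (hsymm : Qᵀ = Q) (hpos : ∀ i j, 0 < Q i j) :
    ∃ lam : ℝ, ∃ v : Fin n → ℝ,
      (∀ i, 0 < v i) ∧ Q.mulVec v = lam • v ∧
      (∀ μ : ℝ, (∃ w : Fin n → ℝ, w ≠ 0 ∧ Q.mulVec w = μ • w) → |μ| ≤ lam) ∧
      (∀ μ : ℝ, (∃ w : Fin n → ℝ, w ≠ 0 ∧ Q.mulVec w = μ • w) → μ ≠ lam → |μ| < lam) ∧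
      (∀ w : Fin n → ℝ, Q.mulVec w = lam • w → ∃ c : ℝ, w = c • v) := by
  classical
  have hherm : Q.IsHermitian := by
    ext i j; simpa using congrFun (congrFun hsymm i) j
  set T : EuclideanSpace ℝ (Fin n) →L[ℝ] EuclideanSpace ℝ (Fin n) :=
    LinearMap.toContinuousLinearMap (Matrix.toEuclideanLin Q) with hT
  have hsa : IsSelfAdjoint T := by
    apply LinearMap.IsSymmetric.isSelfAdjoint
    have := (Matrix.isHermitian_iff_isSymmetric).mp hherm
    simpa [hT] using this
  have hfeq : ∀ x : EuclideanSpace ℝ (Fin n),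
      T.reApplyInnerSelf x = ∑ i, (∑ j, Q i j * x j) * x i := by
    intro x
    rw [ContinuousLinearMap.reApplyInnerSelf_apply]
    have hTx : ∀ i, (T x) i = ∑ j, Q i j * x j := by
      intro i
      simp [hT, Matrix.toEuclideanLin_apply, Matrix.mulVec, dotProduct]
    rw [PiLp.inner_apply]
    simp [hTx, mul_comm]
  -- compact sphere, max point
  have hne : (Metric.sphere (0 : EuclideanSpace ℝ (Fin n)) 1).Nonempty := by
    refine ⟨EuclideanSpace.single ⟨0, hn⟩ 1, ?_⟩
    simp [EuclideanSpace.norm_single]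
  obtain ⟨u, huS, humax⟩ := (isCompact_sphere (0 : EuclideanSpace ℝ (Fin n)) 1).exists_isMaxOn
    hne T.reApplyInnerSelf_continuous.continuousOn
  have hu_norm : ‖u‖ = 1 := mem_sphere_zero_iff_norm.mp huS
  set a : Fin n → ℝ := fun i => |u i| with ha
  set va : EuclideanSpace ℝ (Fin n) := (WithLp.equiv 2 (Fin n → ℝ)).symm a with hva
  have hva_coord : ∀ i, va i = a i := fun i => rfl
  have hva_norm : ‖va‖ = 1 := by
    rw [EuclideanSpace.norm_eq] at hu_norm ⊢
    have h : ∀ i, ‖va i‖ ^ 2 = ‖u i‖ ^ 2 := by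
      intro i; rw [hva_coord]; simp [ha, sq_abs]
    simp only [h]; exact hu_norm
  have hva_ne : va ≠ 0 := by
    intro h; rw [h] at hva_norm; simp at hva_norm
  have hfmax : IsMaxOn T.reApplyInnerSelf (Metric.sphere 0 ‖va‖) va := by
    rw [hva_norm]
    intro x hx
    have h1 : T.reApplyInnerSelf x ≤ T.reApplyInnerSelf u := humax hx
    refine le_trans h1 ?_
    simp only [Set.mem_setOf_eq, hfeq]
    have : ∀ i j : Fin n, Q i j * u j * u i ≤ Q i j * a j * a i := by
      intro i j
      have h1 : u j * u i ≤ a j * a i := by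
        rw [ha]; calc u j * u i ≤ |u j * u i| := le_abs_self _
          _ = |u j| * |u i| := abs_mul _ _
      nlinarith [(hpos i j).le]
    calc ∑ i, (∑ j, Q i j * u j) * u i = ∑ i, ∑ j, Q i j * u j * u i := by
          simp [Finset.sum_mul]
      _ ≤ ∑ i, ∑ j, Q i j * a j * a i := by
          exact Finset.sum_le_sum fun i _ => Finset.sum_le_sum fun j _ => this i j
      _ = ∑ i, (∑ j, Q i j * (va j)) * va i := by
          simp [Finset.sum_mul, hva_coord]
  obtain ⟨lam, hTva⟩ : ∃ lam : ℝ, T va = lam • va :=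
    ⟨_, (hsa.hasEigenvector_of_isMaxOn hva_ne hfmax).apply_eq_smul⟩
  have hQa : Q.mulVec a = lam • a := by
    have h2 := congrArg (WithLp.equiv 2 (Fin n → ℝ)) hTva
    simpa [hT, Matrix.piLp_ofLp_toEuclideanLin, Matrix.toLin'_apply, hva] using h2
  -- positivity
  obtain ⟨j0, hj0⟩ : ∃ i, u i ≠ 0 := by
    by_contra h; push_neg at h
    have : ‖u‖ = 0 := by simp [EuclideanSpace.norm_eq, h]
    rw [hu_norm] at this; norm_num at this
  have haj0 : 0 < a j0 := abs_pos.mpr hj0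
  have hQa_pos : ∀ i, 0 < (Q.mulVec a) i := by
    intro i
    have : (Q.mulVec a) i = ∑ j, Q i j * a j := by
      simp [Matrix.mulVec, dotProduct]
    rw [this]
    exact Finset.sum_pos' (fun j _ => mul_nonneg (hpos i j).le (abs_nonneg _))
      ⟨j0, Finset.mem_univ _, mul_pos (hpos i j0) haj0⟩
  have hlam_pos : 0 < lam := by
    have h := hQa_pos j0
    rw [hQa] at h
    simp only [Pi.smul_apply, smul_eq_mul] at h
    rcases mul_pos_iff.mp h with ⟨h1, _⟩ | ⟨_, h2⟩
    · exact h1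
    · linarith
  have hapos : ∀ i, 0 < a i := by
    intro i
    have h := hQa_pos i
    rw [hQa] at h
    simp only [Pi.smul_apply, smul_eq_mul] at h
    nlinarith [abs_nonneg (u i)]
  have hnefin : Nonempty (Fin n) := ⟨⟨0, hn⟩⟩
  refine ⟨lam, a, hapos, hQa, ?_, ?_, ?_⟩
  · rintro μ ⟨w, hw, hQw⟩
    exact (pf_aux Q hsymm hpos hapos hlam_pos hQa hw hQw).1
  · rintro μ ⟨w, hw, hQw⟩ hμne
    have h := pf_aux Q hsymm hpos hapos hlam_pos hQa hw hQw
    rcases lt_or_eq_of_le h.1 with h1 | h1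
    · exact h1
    · exact absurd ((h.2 h1).1) hμne
  · intro w hQw
    by_cases hw0 : w = 0
    · exact ⟨0, by simp [hw0]⟩
    · have h := (pf_aux Q hsymm hpos hapos hlam_pos hQa hw0 hQw).2 (abs_of_pos hlam_pos)
      rcases h.2 with hsgn | hsgn
      · exact pf_aux2 Q hpos hapos hsgn hQa hQw hnefin
      · have hQw' : Q.mulVec (-w) = lam • (-w) := by
          rw [Matrix.mulVec_neg, hQw]
          funext i; simp
        have hupos : ∀ i, 0 < (-w) i := fun i => by simpa using hsgn i
        obtain ⟨c, hc⟩ := pf_aux2 Q hpos hapos hupos hQa hQw' hnefin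
        refine ⟨-c, funext fun i => ?_⟩
        have := congrFun hc i
        simp only [Pi.neg_apply, Pi.smul_apply, smul_eq_mul] at this ⊢
        linarith
end

section
/- Let W be a symmetric positive semidefinite n×n real matrix (n ≥ 2) whose eigenvector for its largest eigenvalue is entrywise strictly positive and the largest eigenvalue is simple. Let Q be a proper principal submatrix of W. Then λ_max(Q) < λ_max(W). -/
open Matrix Finset

private lemma dot_sum' {n m : ℕ} (w : Fin n → ℝ) (f : Fin m → Fin n → ℝ) :
    w ⬝ᵥ (∑ i, f i) = ∑ i, w ⬝ᵥ f i := by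
  simp only [dotProduct, Finset.sum_apply, Finset.mul_sum]
  exact Finset.sum_comm

private lemma rayleigh_aux {n : ℕ} (W : Matrix (Fin n) (Fin n) ℝ) (hW : W.IsHermitian) (lam : ℝ)
    (hmax : ∀ i, hW.eigenvalues i ≤ lam) (w : Fin n → ℝ) :
    w ⬝ᵥ (W *ᵥ w) ≤ lam * (w ⬝ᵥ w) ∧
    (w ⬝ᵥ (W *ᵥ w) = lam * (w ⬝ᵥ w) → W *ᵥ w = lam • w) := by
  set b := hW.eigenvectorBasis with hb
  set bf : Fin n → Fin n → ℝ := fun i => ⇑(b i) with hbf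
  set c : Fin n → ℝ := fun i => bf i ⬝ᵥ w with hc
  have hw' : w = ∑ i, c i • bf i := by
    have h1 : (WithLp.linearEquiv 2 ℝ (Fin n → ℝ)) (∑ i, b.repr (WithLp.toLp 2 w) i • b i)
        = ∑ i, b.repr (WithLp.toLp 2 w) i • bf i := by
      rw [map_sum]
      refine Finset.sum_congr rfl fun i _ => ?_
      rw [_root_.map_smul]
      rfl
    have h2 : ∀ i, b.repr (WithLp.toLp 2 w) i = c i := by
      intro i
      rw [b.repr_apply_apply, hc, hbf]
      simp [PiLp.inner_apply, dotProduct, RCLike.inner_apply, mul_comm]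
    calc w = (WithLp.linearEquiv 2 ℝ (Fin n → ℝ)) (WithLp.toLp 2 w) := rfl
      _ = (WithLp.linearEquiv 2 ℝ (Fin n → ℝ)) (∑ i, b.repr (WithLp.toLp 2 w) i • b i) := by
          rw [b.sum_repr]
      _ = ∑ i, b.repr (WithLp.toLp 2 w) i • bf i := h1
      _ = ∑ i, c i • bf i := by simp only [h2]
  have hWw : W *ᵥ w = ∑ i, (c i * hW.eigenvalues i) • bf i := by
    conv_lhs => rw [hw']
    rw [← mulVecLin_apply, map_sum]
    refine Finset.sum_congr rfl fun i _ => ?_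
    rw [_root_.map_smul, mulVecLin_apply, hbf, hW.mulVec_eigenvectorBasis, smul_smul, mul_comm]
  have hcw : ∀ i, w ⬝ᵥ bf i = c i := fun i => by rw [dotProduct_comm]
  have hinner : w ⬝ᵥ (W *ᵥ w) = ∑ i, hW.eigenvalues i * (c i)^2 := by
    rw [hWw, dot_sum']
    refine Finset.sum_congr rfl fun i _ => ?_
    rw [dotProduct_smul, smul_eq_mul, hcw]; ring
  have hnorm : w ⬝ᵥ w = ∑ i, (c i)^2 := by
    calc w ⬝ᵥ w = w ⬝ᵥ (∑ i, c i • bf i) := by rw [← hw']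
      _ = ∑ i, (c i)^2 := by
          rw [dot_sum']
          refine Finset.sum_congr rfl fun i _ => ?_
          rw [dotProduct_smul, smul_eq_mul, hcw]; ring
  constructor
  · rw [hinner, hnorm, Finset.mul_sum]
    exact Finset.sum_le_sum fun i _ => mul_le_mul_of_nonneg_right (hmax i) (sq_nonneg _)
  · intro heq
    rw [hinner, hnorm, Finset.mul_sum, ← sub_eq_zero, ← Finset.sum_sub_distrib] at heq
    have hkey : ∀ i ∈ Finset.univ, hW.eigenvalues i * c i ^ 2 - lam * c i ^ 2 = 0 := by
      refine (Finset.sum_eq_zero_iff_of_nonpos ?_).mp heq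
      intro i _
      have := mul_le_mul_of_nonneg_right (hmax i) (sq_nonneg (c i))
      linarith
    rw [hWw]
    have hweq : lam • w = ∑ i, (lam * c i) • bf i := by
      conv_lhs => rw [hw']
      rw [Finset.smul_sum]
      exact Finset.sum_congr rfl fun i _ => by rw [smul_smul]
    rw [hweq]
    refine Finset.sum_congr rfl fun i _ => ?_
    have h := hkey i (Finset.mem_univ i)
    congr 1
    rcases eq_or_ne (c i) 0 with h0 | h0
    · simp [h0]
    · have hl : hW.eigenvalues i = lam := by
        have hsq : (c i)^2 > 0 := by positivity
        nlinarith
      rw [hl]; ring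

/-- If the largest eigenvalue lam of a symmetric PSD matrix W is simple with an entrywise
strictly positive eigenvector, then every eigenvalue of any proper principal submatrix of
W is strictly smaller than lam. -/
theorem stmt_11 {n k : ℕ} (hn : 2 ≤ n) (W : Matrix (Fin n) (Fin n) ℝ)
    (hsymm : Wᵀ = W) (hpsd : W.PosSemidef)
    (lam : ℝ) (v : Fin n → ℝ) (hv : ∀ i, 0 < v i)
    (heig : W.mulVec v = lam • v)
    (hmax : ∀ μ : ℝ, (∃ w : Fin n → ℝ, w ≠ 0 ∧ W.mulVec w = μ • w) → μ ≤ lam)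
    (hsimple : ∀ w : Fin n → ℝ, W.mulVec w = lam • w → ∃ c : ℝ, w = c • v)
    (e : Fin k → Fin n) (he : Function.Injective e) (hk : k < n) :
    ∀ μ : ℝ, (∃ u : Fin k → ℝ, u ≠ 0 ∧ (W.submatrix e e).mulVec u = μ • u) → μ < lam := by
  intro μ ⟨u, hu0, huq⟩
  have hW : W.IsHermitian := hpsd.1
  have hmax' : ∀ i, hW.eigenvalues i ≤ lam := by
    intro i
    refine hmax _ ⟨⇑(hW.eigenvectorBasis i), ?_, hW.mulVec_eigenvectorBasis i⟩
    intro h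
    exact hW.eigenvectorBasis.orthonormal.ne_zero i (by ext j; exact congrFun h j)
  set w : Fin n → ℝ := fun i => ∑ j, if e j = i then u j else 0 with hwdef
  have hwe : ∀ a, w (e a) = u a := by
    intro a
    simp [hwdef, he.eq_iff]
  have hwo : ∀ i, i ∉ Set.range e → w i = 0 := by
    intro i hi
    apply Finset.sum_eq_zero
    intro j _
    rw [if_neg (fun h => hi ⟨j, h⟩)]
  have key : ∀ f : Fin n → ℝ, ∑ i, w i * f i = ∑ a, u a * f (e a) := by
    intro f
    have : ∀ i, w i * f i = ∑ j, if e j = i then u j * f i else 0 := by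
      intro i; rw [hwdef]; simp [Finset.sum_mul, ite_mul]
    simp only [this]
    rw [Finset.sum_comm]
    refine Finset.sum_congr rfl fun j _ => ?_
    simp
  have hWwe : ∀ a, (W *ᵥ w) (e a) = μ * u a := by
    intro a
    have h1 : (W *ᵥ w) (e a) = ∑ i, w i * W (e a) i := by
      simp [mulVec, dotProduct, mul_comm]
    rw [h1, key]
    have h2 : ∑ b, u b * W (e a) (e b) = ((W.submatrix e e) *ᵥ u) a := by
      simp [mulVec, dotProduct, mul_comm]
    rw [h2, huq]
    simp
  have hdot1 : w ⬝ᵥ (W *ᵥ w) = μ * (u ⬝ᵥ u) := by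
    rw [show w ⬝ᵥ (W *ᵥ w) = ∑ i, w i * (W *ᵥ w) i from rfl, key]
    simp only [hWwe, dotProduct, Finset.mul_sum]
    exact Finset.sum_congr rfl fun a _ => by ring
  have hdot2 : w ⬝ᵥ w = u ⬝ᵥ u := by
    rw [show w ⬝ᵥ w = ∑ i, w i * w i from rfl, key]
    exact Finset.sum_congr rfl fun a _ => by rw [hwe]
  have huu : 0 < u ⬝ᵥ u := by
    rcases lt_or_eq_of_le (Finset.sum_nonneg fun i _ => mul_self_nonneg (u i)) with h | h
    · exact h
    · exfalso; exact hu0 ((dotProduct_self_eq_zero).mp h.symm)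
  obtain ⟨hle, heqc⟩ := rayleigh_aux W hW lam hmax' w
  have hμle : μ ≤ lam := by
    rw [hdot1, hdot2] at hle
    exact le_of_mul_le_mul_right (by linarith) huu
  rcases lt_or_eq_of_le hμle with h | h
  · exact h
  · exfalso
    have heq : w ⬝ᵥ (W *ᵥ w) = lam * (w ⬝ᵥ w) := by rw [hdot1, hdot2, h]
    obtain ⟨c, hcv⟩ := hsimple w (heqc heq)
    obtain ⟨i, hi⟩ : ∃ i : Fin n, i ∉ Set.range e := by
      by_contra hcon
      push_neg at hcon
      have : Function.Surjective e := fun i => hcon i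
      have := Fintype.card_le_of_surjective e this
      simp at this
      omega
    have hc0 : c = 0 := by
      have := hwo i hi
      rw [hcv] at this
      simp at this
      rcases this with h | h
      · exact h
      · exact absurd h (ne_of_gt (hv i))
    obtain ⟨a, ha⟩ := Function.ne_iff.mp hu0
    apply ha
    rw [← hwe a, hcv, hc0]
    simp
end
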